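/- Let p be a prime and let σ_j = Σ_{i=0}^{j} p^i. Let n ≥ 1 and suppose n = Σ_{j=0}^{k} b_j σ_j where the b_j are integers with 0 ≤ b_j ≤ p for all j, and whenever b_j = p one has b_i = 0 for all i < j. Then λ_p(n) = Σ_{j=0}^{k} b_j p^j. -/

import Mathlib

/-- The row space of a matrix over `ZMod p`: all linear combinations of its rows. -/
def rowSpace {p m n : ℕ} (M : Matrix (Fin m) (Fin n) (ZMod p)) :
    Submodule (ZMod p) (Fin n → ZMod p) :=
  Submodule.span (ZMod p) {v | ∃ i, v = M i}

/-- The capacity of a matrix: the maximal Hamming weight of a vector in its row space. -/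
noncomputable def capacity {p m n : ℕ} (M : Matrix (Fin m) (Fin n) (ZMod p)) : ℕ :=
  sSup (hammingNorm '' (rowSpace M : Set (Fin n → ZMod p)))

/-- `lambdaP p n` is the minimum capacity over all matrices over `𝔽_p`
with `n` columns, none of which is a zero column.  (For `n = 0` this gives `0`.) -/
noncomputable def lambdaP (p n : ℕ) : ℕ :=
  sInf {c | ∃ (m : ℕ) (M : Matrix (Fin m) (Fin n) (ZMod p)),
    (∀ j, ∃ i, M i j ≠ 0) ∧ c = capacity M}

/-- `sigmaP p k = 1 + p + ⋯ + p^k`. -/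
def sigmaP (p k : ℕ) : ℕ := ∑ j ∈ Finset.range (k + 1), p ^ j

open Finset Matrix

namespace St6


/-- digit sum in base `p` -/
def SS (p t : ℕ) : ℕ := (Nat.digits p t).sum

def valS (p : ℕ) : List ℕ → ℕ
  | [] => 0
  | d :: l => d + l.sum + p * valS p l

/-- `NN p t = ∑ dᵢ σᵢ` where `dᵢ` are base-`p` digits of `t`. -/
def NN (p t : ℕ) : ℕ := valS p (Nat.digits p t)

variable {p : ℕ}

lemma SS_zero : SS p 0 = 0 := by simp [SS]
lemma NN_zero : NN p 0 = 0 := by simp [NN, valS]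

lemma SS_rec (hp : 2 ≤ p) (t : ℕ) : SS p t = t % p + SS p (t / p) := by
  rcases Nat.eq_zero_or_pos t with h | h
  · simp [h, SS]
  · rw [SS, Nat.digits_def' hp h]; simp [SS]

lemma NN_rec (hp : 2 ≤ p) (t : ℕ) :
    NN p t = t % p + SS p (t / p) + p * NN p (t / p) := by
  rcases Nat.eq_zero_or_pos t with h | h
  · simp [h, NN, valS, SS]
  · rw [NN, Nat.digits_def' hp h]; rfl

lemma KI (hp : 2 ≤ p) (t : ℕ) : (p - 1) * NN p t + SS p t = p * t := by
  induction t using Nat.strong_induction_on with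
  | _ t ih =>
    rcases Nat.eq_zero_or_pos t with h | h
    · simp [h, NN_zero, SS_zero]
    · have hq : t / p < t := Nat.div_lt_self h (by omega)
      have IH := ih _ hq
      obtain ⟨P, rfl⟩ : ∃ P, p = P + 1 := ⟨p - 1, by omega⟩
      have h1 : P + 1 - 1 = P := rfl
      rw [h1] at IH ⊢
      rw [NN_rec hp t, SS_rec hp t]
      have ht : (P + 1) * (t / (P + 1)) + t % (P + 1) = t := Nat.div_add_mod t (P + 1)
      set q := t / (P + 1)
      set r := t % (P + 1)
      calc P * (r + SS (P+1) q + (P + 1) * NN (P+1) q) + (r + SS (P+1) q)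
          = (P+1) * r + (P+1) * (P * NN (P+1) q + SS (P+1) q) := by ring
        _ = (P+1) * r + (P+1) * ((P+1) * q) := by rw [IH]
        _ = (P+1) * ((P+1) * q + r) := by ring
        _ = (P+1) * t := by rw [ht]

lemma SS_one (hp : 2 ≤ p) : SS p 1 = 1 := by
  rw [SS_rec hp 1, Nat.mod_eq_of_lt (by omega), Nat.div_eq_of_lt (by omega), SS_zero]

lemma SS_subadd (hp : 2 ≤ p) (x y : ℕ) : SS p (x + y) ≤ SS p x + SS p y := by
  have key : ∀ s, ∀ x y : ℕ, x + y ≤ s → SS p (x + y) ≤ SS p x + SS p y := by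
    intro s
    induction s using Nat.strong_induction_on with
    | _ s ih =>
      intro x y hxy
      have hppos : 0 < p := by omega
      have hx : p * (x / p) + x % p = x := Nat.div_add_mod x p
      have hy : p * (y / p) + y % p = y := Nat.div_add_mod y p
      set a := x / p with ha
      set b := y / p with hb
      set r1 := x % p with hr1
      set r2 := y % p with hr2
      have hr1p : r1 < p := Nat.mod_lt _ hppos
      have hr2p : r2 < p := Nat.mod_lt _ hppos
      have hSx : SS p x = r1 + SS p a := SS_rec hp x
      have hSy : SS p y = r2 + SS p b := SS_rec hp y
      have hab : SS p (a + b) ≤ SS p a + SS p b := by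
        rcases Nat.eq_zero_or_pos (a + b) with h0 | h0
        · obtain ⟨h0a, h0b⟩ := Nat.add_eq_zero.mp h0
          simp [h0a, h0b, SS_zero]
        · have hlt : a + b < s := by nlinarith
          exact ih (a + b) hlt a b le_rfl
      rcases lt_or_ge (r1 + r2) p with hc | hc
      · have hxy' : x + y = p * (a + b) + (r1 + r2) := by
          calc x + y = (p * a + r1) + (p * b + r2) := by rw [hx, hy]
            _ = p * (a + b) + (r1 + r2) := by ring
        have hmod : (x + y) % p = r1 + r2 := by
          rw [hxy', Nat.mul_add_mod, Nat.mod_eq_of_lt hc]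
        have hdiv : (x + y) / p = a + b := by
          rw [hxy', Nat.mul_add_div hppos, Nat.div_eq_of_lt hc, add_zero]
        rw [SS_rec hp (x + y), hmod, hdiv, hSx, hSy]
        omega
      · set r := r1 + r2 - p with hr
        have hrp : r < p := by omega
        have hxy' : x + y = p * (a + b + 1) + r := by
          have h2 : r1 + r2 = p + r := by omega
          calc x + y = (p * a + r1) + (p * b + r2) := by rw [hx, hy]
            _ = p * a + p * b + (r1 + r2) := by ring
            _ = p * a + p * b + (p + r) := by rw [h2]
            _ = p * (a + b + 1) + r := by ring
        have hmod : (x + y) % p = r := by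
          rw [hxy', Nat.mul_add_mod, Nat.mod_eq_of_lt hrp]
        have hdiv : (x + y) / p = a + b + 1 := by
          rw [hxy', Nat.mul_add_div hppos, Nat.div_eq_of_lt hrp, add_zero]
        have hab1 : SS p (a + b + 1) ≤ SS p (a + b) + 1 := by
          have hlt : a + b + 1 < s := by nlinarith
          have := ih (a + b + 1) hlt (a + b) 1 le_rfl
          rwa [SS_one hp] at this
        rw [SS_rec hp (x + y), hmod, hdiv, hSx, hSy]
        omega
  exact key (x + y) x y le_rfl

lemma mul_cancel_le {c x y : ℕ} (hc : 0 < c) (h : c * x ≤ c * y) : x ≤ y :=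
  Nat.le_of_mul_le_mul_left h hc

lemma NN_succ (hp : 2 ≤ p) (t : ℕ) : NN p t + 1 ≤ NN p (t + 1) := by
  obtain ⟨P, rfl⟩ : ∃ P, p = P + 2 := ⟨p - 2, by omega⟩
  have h1 : P + 2 - 1 = P + 1 := rfl
  have k1 := KI hp t
  have k2 := KI hp (t + 1)
  rw [h1] at k1 k2
  have hS : SS (P+2) (t + 1) ≤ SS (P+2) t + 1 := by
    have := SS_subadd hp t 1
    rwa [SS_one hp] at this
  set A := NN (P+2) t
  set B := NN (P+2) (t + 1)
  have k2' : (P+1) * B + SS (P+2) (t+1) = (P+1) * A + SS (P+2) t + (P+2) := by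
    calc (P+1) * B + SS (P+2) (t+1) = (P+2) * (t+1) := k2
      _ = (P+2) * t + (P+2) := by ring
      _ = (P+1) * A + SS (P+2) t + (P+2) := by rw [← k1]
  refine mul_cancel_le (c := P + 1) (by omega) ?_
  have e : (P+1) * (A + 1) = (P+1) * A + (P+1) := by ring
  rw [e]
  set X := (P+1) * A
  set Y := (P+1) * B
  omega

lemma NN_mono (hp : 2 ≤ p) : Monotone (NN p) :=
  monotone_nat_of_le_succ fun t => le_trans (Nat.le_succ _) (NN_succ hp t)

lemma NN_superadd (hp : 2 ≤ p) (x y : ℕ) : NN p x + NN p y ≤ NN p (x + y) := by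
  obtain ⟨P, rfl⟩ : ∃ P, p = P + 2 := ⟨p - 2, by omega⟩
  have h1 : P + 2 - 1 = P + 1 := rfl
  have k1 := KI hp x
  have k2 := KI hp y
  have k3 := KI hp (x + y)
  rw [h1] at k1 k2 k3
  have hS := SS_subadd hp x y
  refine mul_cancel_le (c := P + 1) (by omega) ?_
  have e : (P+1) * (NN (P+2) x + NN (P+2) y) = (P+1) * NN (P+2) x + (P+1) * NN (P+2) y := by
    ring
  rw [e]
  have k3' : (P+1) * NN (P+2) (x+y) + SS (P+2) (x+y)
      = (P+1) * NN (P+2) x + (P+1) * NN (P+2) y + (SS (P+2) x + SS (P+2) y) := by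
    calc (P+1) * NN (P+2) (x+y) + SS (P+2) (x+y) = (P+2) * (x+y) := k3
      _ = (P+2) * x + (P+2) * y := by ring
      _ = _ := by rw [← k1, ← k2]; ring
  set X := (P+1) * NN (P+2) x
  set Y := (P+1) * NN (P+2) y
  set Z := (P+1) * NN (P+2) (x + y)
  omega

lemma NN_div (hp : 2 ≤ p) (t : ℕ) : NN p t = t + NN p (t / p) := by
  obtain ⟨P, rfl⟩ : ∃ P, p = P + 2 := ⟨p - 2, by omega⟩
  have h1 : P + 2 - 1 = P + 1 := rfl
  have kq := KI hp (t / (P + 2))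
  rw [h1] at kq
  have ht : (P + 2) * (t / (P + 2)) + t % (P + 2) = t := Nat.div_add_mod t (P + 2)
  rw [NN_rec hp t]
  set q := t / (P + 2)
  set r := t % (P + 2)
  calc r + SS (P+2) q + (P+2) * NN (P+2) q
      = r + ((P+1) * NN (P+2) q + SS (P+2) q) + NN (P+2) q := by ring
    _ = r + (P+2) * q + NN (P+2) q := by rw [kq]
    _ = t + NN (P+2) q := by omega

lemma NN_ge_self (hp : 2 ≤ p) (t : ℕ) : t ≤ NN p t := by
  rw [NN_div hp t]; omega


lemma pred_mul_add (hp : 1 ≤ p) (x : ℕ) : (p - 1) * x + x = p * x := by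
  obtain ⟨P, rfl⟩ : ∃ P, p = P + 1 := ⟨p - 1, by omega⟩
  have h1 : P + 1 - 1 = P := rfl
  rw [h1]; ring

lemma sigma_zero : sigmaP p 0 = 1 := by simp [sigmaP]

lemma sigma_succ_top (m : ℕ) : sigmaP p (m + 1) = sigmaP p m + p ^ (m + 1) :=
  Finset.sum_range_succ _ _

lemma sigma_succ_bot (m : ℕ) : sigmaP p (m + 1) = p * sigmaP p m + 1 := by
  rw [sigmaP, Finset.sum_range_succ', sigmaP, Finset.mul_sum]
  simp only [pow_zero, pow_succ]
  congr 1
  exact Finset.sum_congr rfl fun i _ => by ring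

lemma geom_pred (hp : 1 ≤ p) (m : ℕ) : (∑ j ∈ range m, (p - 1) * p ^ j) + 1 = p ^ m := by
  induction m with
  | zero => simp
  | succ m ih =>
    rw [Finset.sum_range_succ]
    have h1 : (p - 1) * p ^ m + p ^ m = p * p ^ m := pred_mul_add hp _
    have h2 : p ^ (m + 1) = p * p ^ m := by ring
    omega

lemma sigma_pred (hp : 1 ≤ p) (j : ℕ) : (p - 1) * sigmaP p j + 1 = p ^ (j + 1) := by
  have := geom_pred hp (j + 1)
  rwa [← Finset.mul_sum, ← sigmaP] at this

lemma sigma_sum_pred (hp : 1 ≤ p) (m : ℕ) :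
    (∑ j ∈ range m, (p - 1) * sigmaP p j) + (m + 1) = sigmaP p m := by
  induction m with
  | zero => simp [sigma_zero]
  | succ m ih =>
    rw [Finset.sum_range_succ, sigma_succ_bot]
    have h1 : (p - 1) * sigmaP p m + sigmaP p m = p * sigmaP p m := pred_mul_add hp _
    omega

lemma Dsum (hp : 2 ≤ p) : ∀ (K : ℕ) (c : ℕ → ℕ), (∀ j, j < K → c j < p) →
    SS p (∑ j ∈ range K, c j * p ^ j) = ∑ j ∈ range K, c j := by
  intro K
  induction K with
  | zero => intro c _; simp [SS_zero]
  | succ K ih =>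
    intro c hc
    have hsum : ∑ j ∈ range (K + 1), c j * p ^ j
        = c 0 + p * ∑ j ∈ range K, c (j + 1) * p ^ j := by
      rw [Finset.sum_range_succ', Finset.mul_sum]
      simp only [pow_zero, mul_one]
      rw [add_comm]
      congr 1
      exact Finset.sum_congr rfl fun i _ => by ring
    set q := ∑ j ∈ range K, c (j + 1) * p ^ j with hq
    have hc0 : c 0 < p := hc 0 (by omega)
    have hmod : (c 0 + p * q) % p = c 0 := by
      rw [Nat.add_mul_mod_self_left, Nat.mod_eq_of_lt hc0]
    have hdiv : (c 0 + p * q) / p = q := by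
      rw [Nat.add_mul_div_left _ _ (by omega : 0 < p), Nat.div_eq_of_lt hc0, zero_add]
    rw [hsum, SS_rec hp, hmod, hdiv, ih (fun j => c (j + 1)) (fun j hj => hc (j + 1) (by omega)),
      Finset.sum_range_succ']
    omega

lemma Drep (hp : 2 ≤ p) (K : ℕ) (c : ℕ → ℕ) (hc : ∀ j, j < K → c j < p) :
    NN p (∑ j ∈ range K, c j * p ^ j) = ∑ j ∈ range K, c j * sigmaP p j := by
  have k := KI hp (∑ j ∈ range K, c j * p ^ j)
  rw [Dsum hp K c hc] at k
  have h2 : p * ∑ j ∈ range K, c j * p ^ j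
      = (p - 1) * (∑ j ∈ range K, c j * sigmaP p j) + ∑ j ∈ range K, c j := by
    rw [Finset.mul_sum, Finset.mul_sum, ← Finset.sum_add_distrib]
    refine Finset.sum_congr rfl fun j _ => ?_
    have := sigma_pred (by omega : 1 ≤ p) j
    calc p * (c j * p ^ j) = c j * p ^ (j + 1) := by ring
      _ = c j * ((p - 1) * sigmaP p j + 1) := by rw [this]
      _ = (p - 1) * (c j * sigmaP p j) + c j := by ring
  rw [h2] at k
  have k' : (p - 1) * NN p (∑ j ∈ range K, c j * p ^ j)
      = (p - 1) * ∑ j ∈ range K, c j * sigmaP p j := by omega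
  exact Nat.eq_of_mul_eq_mul_left (by omega) k'

/-- key representation lemma: the digits of `T - 1` and comparison of sigma-values. -/
lemma exists_pred_digits (hp : 2 ≤ p) (k : ℕ) (b : ℕ → ℕ)
    (hb : ∀ j, j ≤ k → b j ≤ p)
    (hbp : ∀ j, j ≤ k → b j = p → ∀ i, i < j → b i = 0)
    (hne : ∃ j, j ≤ k ∧ b j ≠ 0) :
    ∃ c : ℕ → ℕ, (∀ j, j < k + 1 → c j < p) ∧
      (∑ j ∈ range (k + 1), c j * p ^ j) + 1 = ∑ j ∈ range (k + 1), b j * p ^ j ∧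
      (∑ j ∈ range (k + 1), c j * sigmaP p j) + 1 ≤ ∑ j ∈ range (k + 1), b j * sigmaP p j := by
  classical
  have hex : ∃ j, b j ≠ 0 := ⟨hne.choose, hne.choose_spec.2⟩
  set j0 := Nat.find hex with hj0def
  have hbj0 : b j0 ≠ 0 := Nat.find_spec hex
  have hj0min : ∀ i, i < j0 → b i = 0 := fun i hi => by
    by_contra h
    have h2 : j0 ≤ i := Nat.find_le h
    omega
  have hj0k : j0 ≤ k := le_trans (Nat.find_min' hex hne.choose_spec.2) hne.choose_spec.1
  have hsplit : ∀ f : ℕ → ℕ, ∑ j ∈ range (k + 1), f j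
      = (∑ j ∈ range j0, f j) + f j0 + ∑ j ∈ Ico (j0 + 1) (k + 1), f j := by
    intro f
    rw [range_eq_Ico, ← Finset.sum_Ico_consecutive _ (Nat.zero_le (j0 + 1)) (by omega : j0 + 1 ≤ k + 1),
      ← range_eq_Ico, Finset.sum_range_succ]
  have hblt : ∀ j, j0 < j → j ≤ k → b j < p := by
    intro j hj hjk
    rcases lt_or_eq_of_le (hb j hjk) with h | h
    · exact h
    · exact absurd (hbp j hjk h j0 hj) hbj0
  rcases lt_or_eq_of_le (hb j0 hj0k) with hcase | hcase
  · -- b j0 < p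
    refine ⟨fun j => if j < j0 then p - 1 else if j = j0 then b j0 - 1 else b j, ?_, ?_, ?_⟩
    · intro j hj
      by_cases h1 : j < j0
      · simp [h1]; omega
      · by_cases h2 : j = j0
        · simp [h1, h2]; omega
        · simp [h1, h2]
          exact hblt j (by omega) (by omega)
    · rw [hsplit, hsplit (fun j => b j * p ^ j)]
      have e1 : ∑ j ∈ range j0, (if j < j0 then p - 1 else if j = j0 then b j0 - 1 else b j) * p ^ j
          = ∑ j ∈ range j0, (p - 1) * p ^ j :=
        Finset.sum_congr rfl fun j hj => by
          simp [Finset.mem_range.mp hj]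
      have e2 : ∑ j ∈ range j0, b j * p ^ j = 0 :=
        Finset.sum_eq_zero fun j hj => by rw [hj0min j (Finset.mem_range.mp hj)]; ring
      have e3 : ∑ j ∈ Ico (j0 + 1) (k + 1),
            (if j < j0 then p - 1 else if j = j0 then b j0 - 1 else b j) * p ^ j
          = ∑ j ∈ Ico (j0 + 1) (k + 1), b j * p ^ j :=
        Finset.sum_congr rfl fun j hj => by
          have := Finset.mem_Ico.mp hj
          have h1 : ¬ j < j0 := by omega
          have h2 : j ≠ j0 := by omega
          simp [h1, h2]
      have hmid : (fun j => if j < j0 then p - 1 else if j = j0 then b j0 - 1 else b j) j0 = b j0 - 1 := by simp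
      rw [e1, e2, e3, hmid]
      have geo := geom_pred (by omega : 1 ≤ p) j0
      obtain ⟨B, hB⟩ : ∃ B, b j0 = B + 1 := ⟨b j0 - 1, by omega⟩
      rw [hB]
      simp only [Nat.add_sub_cancel]
      have : (B + 1) * p ^ j0 = B * p ^ j0 + p ^ j0 := by ring
      omega
    · rw [hsplit, hsplit (fun j => b j * sigmaP p j)]
      have e1 : ∑ j ∈ range j0, (if j < j0 then p - 1 else if j = j0 then b j0 - 1 else b j) * sigmaP p j
          = ∑ j ∈ range j0, (p - 1) * sigmaP p j :=
        Finset.sum_congr rfl fun j hj => by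
          simp [Finset.mem_range.mp hj]
      have e2 : ∑ j ∈ range j0, b j * sigmaP p j = 0 :=
        Finset.sum_eq_zero fun j hj => by rw [hj0min j (Finset.mem_range.mp hj)]; ring
      have e3 : ∑ j ∈ Ico (j0 + 1) (k + 1),
            (if j < j0 then p - 1 else if j = j0 then b j0 - 1 else b j) * sigmaP p j
          = ∑ j ∈ Ico (j0 + 1) (k + 1), b j * sigmaP p j :=
        Finset.sum_congr rfl fun j hj => by
          have := Finset.mem_Ico.mp hj
          have h1 : ¬ j < j0 := by omega
          have h2 : j ≠ j0 := by omega
          simp [h1, h2]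
      have hmid : (fun j => if j < j0 then p - 1 else if j = j0 then b j0 - 1 else b j) j0 = b j0 - 1 := by simp
      rw [e1, e2, e3, hmid]
      have geo := sigma_sum_pred (by omega : 1 ≤ p) j0
      obtain ⟨B, hB⟩ : ∃ B, b j0 = B + 1 := ⟨b j0 - 1, by omega⟩
      rw [hB]
      simp only [Nat.add_sub_cancel]
      have : (B + 1) * sigmaP p j0 = B * sigmaP p j0 + sigmaP p j0 := by ring
      omega
  · -- b j0 = p
    refine ⟨fun j => if j ≤ j0 then p - 1 else b j, ?_, ?_, ?_⟩
    · intro j hj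
      by_cases h1 : j ≤ j0
      · simp [h1]; omega
      · simp [h1]; exact hblt j (by omega) (by omega)
    · rw [hsplit, hsplit (fun j => b j * p ^ j)]
      have e1 : ∑ j ∈ range j0, (if j ≤ j0 then p - 1 else b j) * p ^ j
          = ∑ j ∈ range j0, (p - 1) * p ^ j :=
        Finset.sum_congr rfl fun j hj => by
          have := Finset.mem_range.mp hj; simp [le_of_lt this]
      have e2 : ∑ j ∈ range j0, b j * p ^ j = 0 :=
        Finset.sum_eq_zero fun j hj => by rw [hj0min j (Finset.mem_range.mp hj)]; ring
      have e3 : ∑ j ∈ Ico (j0 + 1) (k + 1), (if j ≤ j0 then p - 1 else b j) * p ^ j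
          = ∑ j ∈ Ico (j0 + 1) (k + 1), b j * p ^ j :=
        Finset.sum_congr rfl fun j hj => by
          have := Finset.mem_Ico.mp hj
          have h1 : ¬ j ≤ j0 := by omega
          simp [h1]
      have hmid : (fun j => if j ≤ j0 then p - 1 else b j) j0 = p - 1 := by simp
      rw [e1, e2, e3, hmid]
      have geo := geom_pred (by omega : 1 ≤ p) (j0 + 1)
      rw [Finset.sum_range_succ] at geo
      rw [← hcase] at geo
      have hpow : b j0 * p ^ (j0 + 1 - 1)= b j0 * p ^ j0 := by norm_num
      have hps : b j0 ^ (j0+1) = b j0 * b j0 ^ j0 := by ring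
      -- goal: ∑ (p-1)p^j (range j0) + (p-1)*p^{j0} + R + 1 = 0 + b j0 * p^{j0} + R
      have hpj : (b j0 : ℕ) ^ (j0 + 1) = b j0 * b j0 ^ j0 := by ring
      rw [hcase] at geo ⊢
      have : p ^ (j0 + 1) = p * p ^ j0 := by ring
      omega
    · rw [hsplit, hsplit (fun j => b j * sigmaP p j)]
      have e1 : ∑ j ∈ range j0, (if j ≤ j0 then p - 1 else b j) * sigmaP p j
          = ∑ j ∈ range j0, (p - 1) * sigmaP p j :=
        Finset.sum_congr rfl fun j hj => by
          have := Finset.mem_range.mp hj; simp [le_of_lt this]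
      have e2 : ∑ j ∈ range j0, b j * sigmaP p j = 0 :=
        Finset.sum_eq_zero fun j hj => by rw [hj0min j (Finset.mem_range.mp hj)]; ring
      have e3 : ∑ j ∈ Ico (j0 + 1) (k + 1), (if j ≤ j0 then p - 1 else b j) * sigmaP p j
          = ∑ j ∈ Ico (j0 + 1) (k + 1), b j * sigmaP p j :=
        Finset.sum_congr rfl fun j hj => by
          have := Finset.mem_Ico.mp hj
          have h1 : ¬ j ≤ j0 := by omega
          simp [h1]
      have hmid : (fun j => if j ≤ j0 then p - 1 else b j) j0 = p - 1 := by simp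
      rw [e1, e2, e3, hmid]
      have geo := sigma_sum_pred (by omega : 1 ≤ p) (j0 + 1)
      rw [Finset.sum_range_succ] at geo
      have hsb := sigma_succ_bot (p := p) j0
      rw [hcase]
      omega



variable {p : ℕ}

lemma hn_def {ι : Type*} [Fintype ι] (v : ι → ZMod p) :
    hammingNorm v = (Finset.univ.filter fun i => v i ≠ 0).card := rfl

lemma hn_le {ι : Type*} [Fintype ι] (v : ι → ZMod p) : hammingNorm v ≤ Fintype.card ι := by
  rw [hn_def]; exact Finset.card_filter_le _ _

lemma hn_comp_equiv {ι κ : Type*} [Fintype ι] [Fintype κ] (e : ι ≃ κ) (v : κ → ZMod p) :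
    hammingNorm (fun i => v (e i)) = hammingNorm v := by
  rw [hn_def, hn_def]
  refine Finset.card_bij (fun i _ => e i) ?_ ?_ ?_
  · intro i hi; simpa using (Finset.mem_filter.mp hi).2
  · intro i _ j _ h; exact e.injective h
  · intro kk hk
    refine ⟨e.symm kk, ?_, by simp⟩
    simp only [Finset.mem_filter, Finset.mem_univ, true_and, Equiv.apply_symm_apply]
    simpa using (Finset.mem_filter.mp hk).2

lemma hn_sum_type {ι κ : Type*} [Fintype ι] [Fintype κ] (v : ι ⊕ κ → ZMod p) :
    hammingNorm v = hammingNorm (v ∘ Sum.inl) + hammingNorm (v ∘ Sum.inr) := by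
  simp only [hn_def, Finset.card_filter]
  rw [Fintype.sum_sum_type]
  simp [Function.comp]

lemma card_filter_prod {α β : Type*} [Fintype α] [Fintype β] (P : α × β → Prop) [DecidablePred P] :
    (Finset.univ.filter P).card = ∑ a : α, (Finset.univ.filter fun b => P (a, b)).card := by
  simp only [Finset.card_filter]
  rw [← Finset.univ_product_univ, Finset.sum_product]

lemma mem_rowSpace_iff {m n : ℕ} (M : Matrix (Fin m) (Fin n) (ZMod p)) (v : Fin n → ZMod p) :
    v ∈ rowSpace M ↔ ∃ a, a ᵥ* M = v := by
  have hset : {w | ∃ i, w = M i} = Set.range M := by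
    ext w; exact ⟨fun ⟨i, h⟩ => ⟨i, h.symm⟩, fun ⟨i, h⟩ => ⟨i, h.symm⟩⟩
  rw [rowSpace, hset, show Set.range M = Set.range M.row from rfl, ← range_vecMulLinear]
  simp [LinearMap.mem_range]

lemma rowSpace_nonempty {m n : ℕ} (M : Matrix (Fin m) (Fin n) (ZMod p)) :
    (hammingNorm '' (rowSpace M : Set (Fin n → ZMod p))).Nonempty :=
  ⟨hammingNorm (0 : Fin n → ZMod p), ⟨0, Submodule.zero_mem _, rfl⟩⟩

lemma rowSpace_bdd {m n : ℕ} (M : Matrix (Fin m) (Fin n) (ZMod p)) :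
    BddAbove (hammingNorm '' (rowSpace M : Set (Fin n → ZMod p))) := by
  refine ⟨n, ?_⟩
  rintro x ⟨v, _, rfl⟩
  simpa using hn_le v

lemma capacity_le {m n : ℕ} {M : Matrix (Fin m) (Fin n) (ZMod p)} {t : ℕ}
    (h : ∀ a : Fin m → ZMod p, hammingNorm (a ᵥ* M) ≤ t) : capacity M ≤ t := by
  refine csSup_le (rowSpace_nonempty M) ?_
  rintro x ⟨v, hv, rfl⟩
  obtain ⟨a, rfl⟩ := (mem_rowSpace_iff M v).mp hv
  exact h a

lemma le_capacity {m n : ℕ} {M : Matrix (Fin m) (Fin n) (ZMod p)} {v : Fin n → ZMod p}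
    (hv : v ∈ rowSpace M) : hammingNorm v ≤ capacity M :=
  le_csSup (rowSpace_bdd M) ⟨v, hv, rfl⟩

lemma capacity_spec {m n : ℕ} (M : Matrix (Fin m) (Fin n) (ZMod p)) :
    ∃ v ∈ rowSpace M, hammingNorm v = capacity M := by
  have := Nat.sSup_mem (rowSpace_nonempty M) (rowSpace_bdd M)
  obtain ⟨v, hv, he⟩ := this
  exact ⟨v, hv, he⟩

/-- there is a matrix with `n` nonzero columns all of whose row-combinations have
Hamming weight at most `t`. -/
def Good (p n t : ℕ) : Prop :=
  ∃ (I J : Type) (_ : Fintype I) (_ : Fintype J) (_ : DecidableEq J)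
    (M : Matrix I J (ZMod p)), Fintype.card J = n ∧ (∀ j, ∃ i, M i j ≠ 0) ∧
      ∀ a : I → ZMod p, hammingNorm (a ᵥ* M) ≤ t

lemma good_zero : Good p 0 0 := by
  refine ⟨Fin 1, Fin 0, inferInstance, inferInstance, inferInstance,
    Matrix.of fun _ j => 0, by simp, fun j => j.elim0, fun a => ?_⟩
  simp [hn_def]

lemma good_add {n1 t1 n2 t2 : ℕ} (h1 : Good p n1 t1) (h2 : Good p n2 t2) :
    Good p (n1 + n2) (t1 + t2) := by
  obtain ⟨I1, J1, fI1, fJ1, dJ1, M1, hc1, hs1, hcap1⟩ := h1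
  obtain ⟨I2, J2, fI2, fJ2, dJ2, M2, hc2, hs2, hcap2⟩ := h2
  refine ⟨I1 ⊕ I2, J1 ⊕ J2, inferInstance, inferInstance, inferInstance,
    Matrix.fromBlocks M1 0 0 M2, by simp [hc1, hc2], ?_, ?_⟩
  · rintro (j | j)
    · obtain ⟨i, hi⟩ := hs1 j
      exact ⟨Sum.inl i, by simpa using hi⟩
    · obtain ⟨i, hi⟩ := hs2 j
      exact ⟨Sum.inr i, by simpa using hi⟩
  · intro a
    have hL : ∀ x : J1, (a ᵥ* Matrix.fromBlocks M1 0 0 M2) (Sum.inl x)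
        = ((a ∘ Sum.inl) ᵥ* M1) x := by
      intro x
      simp [Matrix.vecMul, dotProduct, Fintype.sum_sum_type]
    have hR : ∀ x : J2, (a ᵥ* Matrix.fromBlocks M1 0 0 M2) (Sum.inr x)
        = ((a ∘ Sum.inr) ᵥ* M2) x := by
      intro x
      simp [Matrix.vecMul, dotProduct, Fintype.sum_sum_type]
    rw [hn_sum_type]
    have e1 : (a ᵥ* Matrix.fromBlocks M1 0 0 M2) ∘ Sum.inl = (a ∘ Sum.inl) ᵥ* M1 :=
      funext hL
    have e2 : (a ᵥ* Matrix.fromBlocks M1 0 0 M2) ∘ Sum.inr = (a ∘ Sum.inr) ᵥ* M2 :=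
      funext hR
    rw [e1, e2]
    exact Nat.add_le_add (hcap1 _) (hcap2 _)



variable {p : ℕ}

lemma good_simplex (hp : p.Prime) : ∀ j : ℕ, Good p (sigmaP p j) (p ^ j) := by
  haveI : Fact p.Prime := ⟨hp⟩
  haveI : NeZero p := ⟨hp.pos.ne'⟩
  intro j
  induction j with
  | zero =>
    refine ⟨Fin 1, Fin 1, inferInstance, inferInstance, inferInstance,
      Matrix.of fun _ _ => 1, by simp [sigma_zero], fun j => ⟨0, one_ne_zero⟩, fun a => ?_⟩
    exact le_trans (hn_le _) (by norm_num)
  | succ j ih =>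
    obtain ⟨I, J, fI, fJ, dJ, M, hcard, hsupp, hcap⟩ := ih
    classical
    refine ⟨I ⊕ Unit, (ZMod p × J) ⊕ Unit, inferInstance, inferInstance, inferInstance,
      Matrix.of fun i' j' =>
        match i', j' with
        | Sum.inl i, Sum.inl cv => M i cv.2
        | Sum.inr _, Sum.inl cv => cv.1
        | Sum.inl _, Sum.inr _ => 0
        | Sum.inr _, Sum.inr _ => 1,
      ?_, ?_, ?_⟩
    · simp [ZMod.card, hcard, sigma_succ_bot]
    · rintro (⟨c, v⟩ | u)
      · obtain ⟨i, hi⟩ := hsupp v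
        exact ⟨Sum.inl i, hi⟩
      · exact ⟨Sum.inr (), one_ne_zero⟩
    · intro a'
      set M' : Matrix (I ⊕ Unit) ((ZMod p × J) ⊕ Unit) (ZMod p) := Matrix.of fun i' j' =>
        match i', j' with
        | Sum.inl i, Sum.inl cv => M i cv.2
        | Sum.inr _, Sum.inl cv => cv.1
        | Sum.inl _, Sum.inr _ => 0
        | Sum.inr _, Sum.inr _ => 1 with hM'
      set g := (a' ∘ Sum.inl) ᵥ* M with hg
      set t := a' (Sum.inr ()) with ht
      have wL : ∀ (c : ZMod p) (v : J), (a' ᵥ* M') (Sum.inl (c, v)) = g v + t * c := by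
        intro c v
        simp only [Matrix.vecMul, dotProduct, Fintype.sum_sum_type, hM', hg, ht]
        simp [Function.comp]
      have wR : (a' ᵥ* M') (Sum.inr ()) = t := by
        simp only [Matrix.vecMul, dotProduct, Fintype.sum_sum_type, hM', ht]
        simp
      rw [hn_sum_type]
      have hprod : hammingNorm ((a' ᵥ* M') ∘ Sum.inl)
          = ∑ c : ZMod p, (Finset.univ.filter fun v : J => ¬ (g v + t * c = 0)).card := by
        rw [hn_def]
        have : (Finset.univ.filter fun cv : ZMod p × J => ((a' ᵥ* M') ∘ Sum.inl) cv ≠ 0)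
            = Finset.univ.filter fun cv : ZMod p × J => ¬ (g cv.2 + t * cv.1 = 0) := by
          apply Finset.filter_congr
          intro cv _
          rw [Function.comp_apply]
          rw [show (cv : ZMod p × J) = (cv.1, cv.2) from rfl, wL cv.1 cv.2]
        rw [this, card_filter_prod]
      by_cases htz : t = 0
      · -- t = 0
        have hunit : hammingNorm ((a' ᵥ* M') ∘ Sum.inr) = 0 := by
          rw [hn_def, Finset.card_eq_zero, Finset.filter_eq_empty_iff]
          intro u _
          rcases u with ⟨⟩
          simp [wR, htz]
        rw [hprod, hunit]
        have hcc : ∀ c : ZMod p, (Finset.univ.filter fun v : J => ¬ (g v + t * c = 0)).card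
            ≤ p ^ j := by
          intro c
          have : (Finset.univ.filter fun v : J => ¬ (g v + t * c = 0))
              = Finset.univ.filter fun v : J => ¬ (g v = 0) := by
            apply Finset.filter_congr; intro v _; rw [htz]; simp
          rw [this]
          have := hcap (a' ∘ Sum.inl)
          rw [hn_def] at this
          simpa using this
        calc (∑ c : ZMod p, (Finset.univ.filter fun v : J => ¬ (g v + t * c = 0)).card) + 0
            ≤ (∑ _c : ZMod p, p ^ j) + 0 := by
              exact Nat.add_le_add_right (Finset.sum_le_sum fun c _ => hcc c) 0
          _ = p * p ^ j := by simp [Finset.sum_const, ZMod.card, mul_comm]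
          _ = p ^ (j + 1) := by ring
      · -- t ≠ 0
        have hunit : hammingNorm ((a' ᵥ* M') ∘ Sum.inr) ≤ 1 := by
          have := hn_le (p := p) ((a' ᵥ* M') ∘ Sum.inr)
          simpa using this
        have hswap : (∑ c : ZMod p, (Finset.univ.filter fun v : J => ¬ (g v + t * c = 0)).card)
            = ∑ v : J, (Finset.univ.filter fun c : ZMod p => ¬ (g v + t * c = 0)).card := by
          simp only [Finset.card_filter]
          rw [Finset.sum_comm]
        have hinner : ∀ v : J, (Finset.univ.filter fun c : ZMod p => ¬ (g v + t * c = 0)).card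
            = p - 1 := by
          intro v
          have hsol' : ∀ c : ZMod p, (g v + t * c = 0) ↔ c = -(g v) * t⁻¹ := by
            intro c
            constructor
            · intro h
              have htc : t * c = -(g v) := by linear_combination h
              calc c = t⁻¹ * (t * c) := by rw [← mul_assoc, inv_mul_cancel₀ htz, one_mul]
                _ = t⁻¹ * (-(g v)) := by rw [htc]
                _ = -(g v) * t⁻¹ := by ring
            · intro h
              subst h
              have htc : t * (-(g v) * t⁻¹) = -(g v) := by
                rw [mul_comm (-(g v)) t⁻¹, ← mul_assoc, mul_inv_cancel₀ htz, one_mul]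
              rw [htc]; ring
          have hsol : (Finset.univ.filter fun c : ZMod p => g v + t * c = 0) = {-(g v) * t⁻¹} := by
            ext c
            simp only [Finset.mem_filter, Finset.mem_univ, true_and, Finset.mem_singleton]
            exact hsol' c
          have hpart := Finset.card_filter_add_card_filter_not
            (s := (Finset.univ : Finset (ZMod p))) (p := fun c => g v + t * c = 0)
          rw [hsol] at hpart
          simp only [Finset.card_singleton, Finset.card_univ, ZMod.card] at hpart
          omega
        rw [hprod, hswap]
        have : (∑ _v : J, (p - 1)) = sigmaP p j * (p - 1) := by
          simp [Finset.sum_const, hcard, mul_comm]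
        rw [Finset.sum_congr rfl fun v _ => hinner v, this]
        have hsp := sigma_pred (by have := hp.two_le; omega : 1 ≤ p) j
        have h2 : sigmaP p j * (p - 1) = (p - 1) * sigmaP p j := by ring
        omega

lemma good_smul (c : ℕ) {n t : ℕ} (h : Good p n t) : Good p (c * n) (c * t) := by
  induction c with
  | zero => simpa using good_zero
  | succ c ih =>
    have := good_add ih h
    have e1 : (c + 1) * n = c * n + n := by ring
    have e2 : (c + 1) * t = c * t + t := by ring
    rwa [e1, e2]

lemma good_sum (K : ℕ) (f g : ℕ → ℕ) (h : ∀ i, i < K → Good p (f i) (g i)) :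
    Good p (∑ i ∈ Finset.range K, f i) (∑ i ∈ Finset.range K, g i) := by
  induction K with
  | zero => simpa using good_zero
  | succ K ih =>
    rw [Finset.sum_range_succ, Finset.sum_range_succ]
    exact good_add (ih fun i hi => h i (by omega)) (h K (by omega))

lemma good_exists_matrix {n t : ℕ} (h : Good p n t) :
    ∃ (m : ℕ) (M : Matrix (Fin m) (Fin n) (ZMod p)),
      (∀ j, ∃ i, M i j ≠ 0) ∧ capacity M ≤ t := by
  obtain ⟨I, J, fI, fJ, dJ, M, hcard, hsupp, hcap⟩ := h
  let eI : I ≃ Fin (Fintype.card I) := Fintype.equivFin I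
  let eJ : J ≃ Fin n := Fintype.equivFinOfCardEq hcard
  refine ⟨Fintype.card I, Matrix.of fun x y => M (eI.symm x) (eJ.symm y), ?_, ?_⟩
  · intro y
    obtain ⟨i, hi⟩ := hsupp (eJ.symm y)
    exact ⟨eI i, by simpa using hi⟩
  · apply capacity_le
    intro a
    have key : ∀ y, (a ᵥ* Matrix.of fun x y => M (eI.symm x) (eJ.symm y)) y
        = ((a ∘ eI) ᵥ* M) (eJ.symm y) := by
      intro y
      simp only [Matrix.vecMul, dotProduct, Matrix.of_apply]
      exact Fintype.sum_equiv eI.symm (fun x => a x * M (eI.symm x) (eJ.symm y))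
        (fun i => (a ∘ eI) i * M i (eJ.symm y)) (fun x => by simp [Function.comp])
    have keyf : (a ᵥ* Matrix.of fun x y => M (eI.symm x) (eJ.symm y))
        = fun y => ((a ∘ eI) ᵥ* M) (eJ.symm y) := funext key
    rw [keyf]
    exact le_trans (le_of_eq (hn_comp_equiv eJ.symm ((a ∘ eI) ᵥ* M))) (hcap _)



variable {p : ℕ}

lemma card_ne_shift [Fact p.Prime] {t : ZMod p} (ht : t ≠ 0) (s : ZMod p) :
    (Finset.univ.filter fun c : ZMod p => ¬ (s + c * t = 0)).card = p - 1 := by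
  haveI : NeZero p := ⟨(Fact.out : p.Prime).pos.ne'⟩
  have hsol' : ∀ c : ZMod p, (s + c * t = 0) ↔ c = -s * t⁻¹ := by
    intro c
    constructor
    · intro h
      have htc : c * t = -s := by linear_combination h
      calc c = c * t * t⁻¹ := by rw [mul_assoc, mul_inv_cancel₀ ht, mul_one]
        _ = -s * t⁻¹ := by rw [htc]
    · intro h
      subst h
      have : -s * t⁻¹ * t = -s := by rw [mul_assoc, inv_mul_cancel₀ ht, mul_one]
      rw [this]; ring
  have hsol : (Finset.univ.filter fun c : ZMod p => s + c * t = 0) = {-s * t⁻¹} := by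
    ext c
    simp only [Finset.mem_filter, Finset.mem_univ, true_and, Finset.mem_singleton]
    exact hsol' c
  have hpart := Finset.card_filter_add_card_filter_not
    (s := (Finset.univ : Finset (ZMod p))) (p := fun c => s + c * t = 0)
  rw [hsol] at hpart
  simp only [Finset.card_singleton, Finset.card_univ, ZMod.card] at hpart
  omega

lemma card_filter_partition {α : Type*} [Fintype α] (P Q : α → Prop)
    [DecidablePred P] [DecidablePred Q] :
    (Finset.univ.filter P).card
      = (Finset.univ.filter fun x => P x ∧ Q x).card
        + (Finset.univ.filter fun x => P x ∧ ¬ Q x).card := by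
  have := Finset.card_filter_add_card_filter_not
    (s := Finset.univ.filter P) (p := Q)
  rw [Finset.filter_filter, Finset.filter_filter] at this
  omega

lemma lower_bound (hp : p.Prime) : ∀ n m (M : Matrix (Fin m) (Fin n) (ZMod p)),
    (∀ j, ∃ i, M i j ≠ 0) → n ≤ NN p (capacity M) := by
  haveI : Fact p.Prime := ⟨hp⟩
  have hp2 : 2 ≤ p := hp.two_le
  intro n
  induction n using Nat.strong_induction_on with
  | _ n ih =>
    intro m M hsupp
    rcases Nat.eq_zero_or_pos n with hn0 | hn0
    · simp [hn0]
    obtain ⟨v, hvmem, hvnorm⟩ := capacity_spec M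
    set w := capacity M with hw
    have hw1 : 1 ≤ w := by
      obtain ⟨i, hi⟩ := hsupp ⟨0, hn0⟩
      have hrow : M i ∈ rowSpace M := Submodule.subset_span ⟨i, rfl⟩
      have h1 : 1 ≤ hammingNorm (M i) := by
        rw [hn_def, Nat.succ_le_iff, Finset.card_pos]
        exact ⟨⟨0, hn0⟩, Finset.mem_filter.mpr ⟨Finset.mem_univ _, hi⟩⟩
      exact le_trans h1 (le_capacity hrow)
    have hwn : w ≤ n := by
      rw [← hvnorm]
      simpa using hn_le v
    have hnv : (Finset.univ.filter fun j : Fin n => ¬ (v j = 0)).card = w := by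
      rw [← hvnorm, hn_def]
    have hcz : Fintype.card {j : Fin n // v j = 0} = n - w := by
      rw [Fintype.card_subtype]
      have hpart := Finset.card_filter_add_card_filter_not
        (s := (Finset.univ : Finset (Fin n))) (p := fun j => v j = 0)
      simp only [Finset.card_univ, Fintype.card_fin] at hpart
      omega
    let eZ : Fin (n - w) ≃ {j : Fin n // v j = 0} := (Fintype.equivFinOfCardEq hcz).symm
    set M' : Matrix (Fin m) (Fin (n - w)) (ZMod p) := Matrix.of fun i y => M i (eZ y).1 with hM'
    have hsupp' : ∀ y, ∃ i, M' i y ≠ 0 := fun y => hsupp (eZ y).1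
    have hcap' : capacity M' ≤ w / p := by
      apply capacity_le
      intro a
      set u := a ᵥ* M with hu
      have humem : u ∈ rowSpace M := (mem_rowSpace_iff M u).mpr ⟨a, rfl⟩
      have huM' : a ᵥ* M' = fun y => u (eZ y).1 := rfl
      set A : ZMod p → ℕ := fun c =>
        (Finset.univ.filter fun j : Fin n =>
          ¬ (u j + c * v j = 0) ∧ ¬ (v j = 0)).card with hA
      set D := hammingNorm (a ᵥ* M') with hDdef
      have hD : D = (Finset.univ.filter fun j : Fin n => ¬ (u j = 0) ∧ v j = 0).card := by
        rw [hDdef, huM', hn_def]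
        refine Finset.card_bij (fun y _ => (eZ y).1) ?_ ?_ ?_
        · intro y hy
          refine Finset.mem_filter.mpr ⟨Finset.mem_univ _, ?_, (eZ y).2⟩
          simpa using (Finset.mem_filter.mp hy).2
        · intro y1 _ y2 _ h
          exact eZ.injective (Subtype.ext h)
        · intro j hj
          obtain ⟨-, hju, hj0⟩ := Finset.mem_filter.mp hj
          refine ⟨eZ.symm ⟨j, hj0⟩, ?_, by simp⟩
          refine Finset.mem_filter.mpr ⟨Finset.mem_univ _, ?_⟩
          simpa [Equiv.apply_symm_apply] using hju
      have hsumA : ∑ c : ZMod p, A c = w * (p - 1) := by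
        simp only [hA, Finset.card_filter]
        rw [Finset.sum_comm]
        have per : ∀ j : Fin n,
            (∑ c : ZMod p, if ¬ (u j + c * v j = 0) ∧ ¬ (v j = 0) then 1 else 0)
              = if v j = 0 then 0 else p - 1 := by
          intro j
          by_cases hvj : v j = 0
          · simp [hvj]
          · rw [if_neg hvj]
            have : ∀ c : ZMod p, (if ¬ (u j + c * v j = 0) ∧ ¬ (v j = 0) then 1 else 0)
                = if ¬ (u j + c * v j = 0) then 1 else 0 := by
              intro c
              by_cases h : ¬ (u j + c * v j = 0) <;> simp [h, hvj]
            rw [Finset.sum_congr rfl fun c _ => this c, ← Finset.card_filter]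
            exact card_ne_shift hvj (u j)
        rw [Finset.sum_congr rfl fun j _ => per j, Finset.sum_ite, Finset.sum_const,
          Finset.sum_const]
        have : (Finset.univ.filter fun j : Fin n => ¬ (v j = 0)).card = w := hnv
        rw [this]
        simp
      have hexists : ∃ c : ZMod p, w * (p - 1) ≤ p * A c := by
        haveI : NeZero p := ⟨hp.pos.ne'⟩
        have huniv : (Finset.univ : Finset (ZMod p)).Nonempty := Finset.univ_nonempty
        have hsum : ∑ _c : ZMod p, w * (p - 1) ≤ ∑ c : ZMod p, p * A c := by
          rw [Finset.sum_const, Finset.card_univ, ZMod.card, ← Finset.mul_sum, hsumA,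
            smul_eq_mul]
        obtain ⟨c, _, hc⟩ := Finset.exists_le_of_sum_le huniv hsum
        exact ⟨c, hc⟩
      obtain ⟨c, hc⟩ := hexists
      have hmem2 : u + c • v ∈ rowSpace M :=
        Submodule.add_mem _ humem (Submodule.smul_mem _ c hvmem)
      have hble : hammingNorm (u + c • v) ≤ w := le_capacity hmem2
      have happ : ∀ j, (u + c • v) j = u j + c * v j := by
        intro j; simp [Pi.add_apply, Pi.smul_apply, smul_eq_mul]
      have hsplitHN : hammingNorm (u + c • v) = A c + D := by
        rw [hn_def]
        have e0 : (Finset.univ.filter fun j : Fin n => (u + c • v) j ≠ 0)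
            = Finset.univ.filter fun j : Fin n => ¬ (u j + c * v j = 0) := by
          apply Finset.filter_congr
          intro j _
          rw [happ j]
        rw [e0, card_filter_partition (fun j => ¬ (u j + c * v j = 0)) (fun j => v j = 0)]
        have e1 : (Finset.univ.filter fun j : Fin n => ¬ (u j + c * v j = 0) ∧ v j = 0)
            = Finset.univ.filter fun j : Fin n => ¬ (u j = 0) ∧ v j = 0 := by
          apply Finset.filter_congr
          intro j _
          constructor
          · rintro ⟨h1, h2⟩
            refine ⟨?_, h2⟩
            intro hu0
            exact h1 (by rw [h2, hu0]; ring)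
          · rintro ⟨h1, h2⟩
            refine ⟨?_, h2⟩
            intro hq
            exact h1 (by rw [h2] at hq; simpa using hq)
        rw [e1, ← hD]
        simp only [hA]
        omega
      have hDAw : D + A c ≤ w := by
        have hb2 := hble
        rw [hsplitHN] at hb2
        omega
      rw [Nat.le_div_iff_mul_le hp.pos]
      have h1 : p * D + p * A c ≤ p * w := by
        calc p * D + p * A c = p * (D + A c) := by ring
          _ ≤ p * w := Nat.mul_le_mul_left p hDAw
      have h3 : (p - 1) * w + w = p * w := pred_mul_add (by omega) w
      have h5 : p * D + (p - 1) * w ≤ w + (p - 1) * w := by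
        calc p * D + (p - 1) * w = p * D + w * (p - 1) := by ring
          _ ≤ p * D + p * A c := Nat.add_le_add_left hc _
          _ ≤ p * w := h1
          _ = w + (p - 1) * w := by omega
      have h6 : p * D ≤ w := Nat.add_le_add_iff_right.mp h5
      calc D * p = p * D := by ring
        _ ≤ w := h6
    have hrec : n - w ≤ NN p (capacity M') := ih (n - w) (by omega) m M' hsupp'
    have h7 : n - w ≤ NN p (w / p) := le_trans hrec (NN_mono hp2 hcap')
    have h8 := NN_div hp2 w
    omega

end St6

theorem statement6 (p : ℕ) (hp : p.Prime) (k n : ℕ) (hn : 1 ≤ n)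
    (b : ℕ → ℕ)
    (hb : ∀ j, j ≤ k → b j ≤ p)
    (hbp : ∀ j, j ≤ k → b j = p → ∀ i, i < j → b i = 0)
    (hnsum : n = ∑ j ∈ Finset.range (k + 1), b j * sigmaP p j) :
    lambdaP p n = ∑ j ∈ Finset.range (k + 1), b j * p ^ j := by
  classical
  haveI : Fact p.Prime := ⟨hp⟩
  have hp2 : 2 ≤ p := hp.two_le
  set T := ∑ j ∈ Finset.range (k + 1), b j * p ^ j with hT
  have hgood : St6.Good p n T := by
    rw [hnsum, hT]
    exact St6.good_sum (k + 1) _ _ fun i hi =>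
      St6.good_smul (b i) (St6.good_simplex hp i)
  obtain ⟨m0, M0, hs0, hc0⟩ := St6.good_exists_matrix hgood
  have hbne : ∃ j, j ≤ k ∧ b j ≠ 0 := by
    by_contra h
    push_neg at h
    have hzero : n = 0 := by
      rw [hnsum]
      refine Finset.sum_eq_zero fun j hj => ?_
      have hjk : j ≤ k := Nat.lt_succ_iff.mp (Finset.mem_range.mp hj)
      rw [h j hjk]
      ring
    omega
  obtain ⟨c, hcdig, hcsum, hcsig⟩ := St6.exists_pred_digits hp2 k b hb hbp hbne
  have hTpred : St6.NN p (∑ j ∈ Finset.range (k + 1), c j * p ^ j)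
      = ∑ j ∈ Finset.range (k + 1), c j * sigmaP p j :=
    St6.Drep hp2 (k + 1) c hcdig
  have hlow : ∀ cc ∈ {c | ∃ (m : ℕ) (M : Matrix (Fin m) (Fin n) (ZMod p)),
      (∀ j, ∃ i, M i j ≠ 0) ∧ c = capacity M}, T ≤ cc := by
    rintro cc ⟨m, M, hs, rfl⟩
    have h1 : n ≤ St6.NN p (capacity M) := St6.lower_bound hp n m M hs
    by_contra hlt
    push_neg at hlt
    have h2 : capacity M ≤ ∑ j ∈ Finset.range (k + 1), c j * p ^ j := by omega
    have h3 : St6.NN p (capacity M) ≤ St6.NN p (∑ j ∈ Finset.range (k + 1), c j * p ^ j) :=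
      St6.NN_mono hp2 h2
    rw [hTpred] at h3
    have hns : (∑ j ∈ Finset.range (k + 1), b j * sigmaP p j) = n := hnsum.symm
    omega
  have hmemset : capacity M0 ∈ {c | ∃ (m : ℕ) (M : Matrix (Fin m) (Fin n) (ZMod p)),
      (∀ j, ∃ i, M i j ≠ 0) ∧ c = capacity M} := ⟨m0, M0, hs0, rfl⟩
  have hM0T : capacity M0 = T := le_antisymm hc0 (hlow _ hmemset)
  unfold lambdaP
  apply le_antisymm
  · exact le_trans (Nat.sInf_le hmemset) (le_of_eq hM0T)
  · exact hlow _ (Nat.sInf_mem ⟨_, hmemset⟩)
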